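/- Let G be a finite F-group with [G : Z(G)] = p^k (p prime) such that [Z(C(x)) : Z(G)] ≤ p^2 for all non-central x ∈ G. If v is the number of distinct proper centralizers C(x) with [Z(C(x)) : Z(G)] = p^2, then |Cent(G)| = p^{k−1} + p^{k−2} + ⋯ + p + 2 − vp. -/

import Mathlib

/-- The set of element centralizers of `G`. -/
def cent (G : Type*) [Group G] : Set (Subgroup G) :=
  Set.range fun x : G => Subgroup.centralizer {x}

/-- The number of distinct element centralizers of `G`. -/
noncomputable def numCent (G : Type*) [Group G] : ℕ := (cent G).ncard

/-- The center of the centralizer `C(x)`, viewed as a subgroup of `G`. -/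
def centerCentralizer {G : Type*} [Group G] (x : G) : Subgroup G :=
  Subgroup.centralizer {x} ⊓
    Subgroup.centralizer ((Subgroup.centralizer {x} : Subgroup G) : Set G)

/-- `G` is an F-group: for non-central `x, y`, `C(x) ≤ C(y)` implies `C(x) = C(y)`. -/
def IsFGroup (G : Type*) [Group G] : Prop :=
  ∀ x y : G, x ∉ Subgroup.center G → y ∉ Subgroup.center G →
    Subgroup.centralizer {x} ≤ Subgroup.centralizer {y} →
    Subgroup.centralizer ({x} : Set G) = Subgroup.centralizer {y}

/-- The set of conjugates of a subgroup `H` of `G`. -/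
def conjugates {G : Type*} [Group G] (H : Subgroup G) : Set (Subgroup G) :=
  {K | ∃ g : G, K = Subgroup.map (MulAut.conj g).toMonoidHom H}

/-- The number of `z`-classes of `G`: elements are `z`-equivalent when their
centralizers are conjugate in `G`, so the number of `z`-classes is the number of
distinct conjugacy classes of element centralizers. -/
noncomputable def numZClasses (G : Type*) [Group G] : ℕ :=
  (Set.range fun x : G => conjugates (Subgroup.centralizer {x})).ncard

section aux

variable {G : Type*} [Group G]

theorem aux_mem_cc (x : G) : x ∈ centerCentralizer x := by
  constructor
  · simp [Subgroup.mem_centralizer_iff]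
  · refine Subgroup.mem_centralizer_iff.mpr ?_
    intro h hh
    exact (Subgroup.mem_centralizer_iff.mp hh x rfl).symm

theorem aux_center_le_cc (x : G) : Subgroup.center G ≤ centerCentralizer x := by
  intro z hz
  exact ⟨Subgroup.mem_centralizer_iff.mpr fun h _ => (Subgroup.mem_center_iff.mp hz h),
    Subgroup.mem_centralizer_iff.mpr fun h _ => (Subgroup.mem_center_iff.mp hz h)⟩

theorem aux_card (Z K : Subgroup G) (h : Z ≤ K) :
    Nat.card K = Z.relIndex K * Nat.card Z := by
  rw [Subgroup.relIndex, ← Subgroup.index_mul_card (G := K) (Z.subgroupOf K),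
    Nat.card_congr (Subgroup.subgroupOfEquivOfLe h).toEquiv]

theorem aux_fiber (hF : IsFGroup G) (x g : G) (hx : x ∉ Subgroup.center G)
    (hg : g ∉ Subgroup.center G) :
    Subgroup.centralizer {g} = Subgroup.centralizer {x} ↔ g ∈ centerCentralizer x := by
  constructor
  · intro h
    refine ⟨?_, ?_⟩
    · rw [← h]; exact (aux_mem_cc g).1
    · rw [← h]; exact (aux_mem_cc g).2
  · intro hgK
    have hle : Subgroup.centralizer ({x} : Set G) ≤ Subgroup.centralizer {g} := by
      intro c hc
      refine Subgroup.mem_centralizer_iff.mpr ?_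
      rintro h rfl
      exact (Subgroup.mem_centralizer_iff.mp hgK.2 c hc).symm
    exact (hF x g hx hg hle).symm

theorem aux_ne_top (x : G) (hx : x ∉ Subgroup.center G) :
    Subgroup.centralizer ({x} : Set G) ≠ ⊤ := by
  intro h
  exact hx (Subgroup.centralizer_eq_top_iff_subset.mp h rfl)

end aux

theorem stmt11 (G : Type*) [Group G] [Finite G] (hF : IsFGroup G)
    (p k : ℕ) (hp : p.Prime) (hk : (Subgroup.center G).index = p ^ k)
    (hle : ∀ x : G, x ∉ Subgroup.center G →
      (Subgroup.center G).relIndex (centerCentralizer x) ≤ p ^ 2)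
    (v : ℕ)
    (hv : v = ({H | ∃ x : G, x ∉ Subgroup.center G ∧ H = Subgroup.centralizer {x} ∧
      (Subgroup.center G).relIndex (centerCentralizer x) = p ^ 2} :
        Set (Subgroup G)).ncard) :
    numCent G = (p ^ k - 1) / (p - 1) + 1 - v * p := by
  classical
  cases nonempty_fintype G
  set Z := Subgroup.center G with hZdef
  set φ : G → Subgroup G := fun g => Subgroup.centralizer {g} with hφ
  set N : Finset G := Finset.univ.filter (fun g => g ∉ Z) with hN
  set T : Finset (Subgroup G) := N.image φ with hT
  set r : Subgroup G → ℕ :=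
    fun H => Z.relIndex (H ⊓ Subgroup.centralizer (H : Set G)) with hrdef
  have hrφ : ∀ x : G, r (φ x) = Z.relIndex (centerCentralizer x) := fun x => rfl
  set cZ : ℕ := Nat.card Z with hcZ
  have hcZpos : 0 < cZ := Nat.card_pos
  -- `numCent G = T.card + 1`
  have hcent : cent G = insert ⊤ (↑T : Set (Subgroup G)) := by
    ext H
    simp only [cent, Set.mem_range, Set.mem_insert_iff, Finset.coe_image, Set.mem_image,
      Finset.mem_coe, hT, hN, Finset.mem_filter, Finset.mem_univ, true_and]
    constructor
    · rintro ⟨g, rfl⟩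
      by_cases hg : g ∈ Z
      · exact Or.inl (Subgroup.centralizer_eq_top_iff_subset.mpr (Set.singleton_subset_iff.mpr hg))
      · exact Or.inr ⟨g, hg, rfl⟩
    · rintro (rfl | ⟨g, hg, rfl⟩)
      · exact ⟨1, Subgroup.centralizer_eq_top_iff_subset.mpr
          (Set.singleton_subset_iff.mpr (Subgroup.one_mem _))⟩
      · exact ⟨g, rfl⟩
  have htopT : (⊤ : Subgroup G) ∉ (↑T : Set (Subgroup G)) := by
    simp only [hT, hN, Finset.coe_image, Set.mem_image, Finset.mem_coe, Finset.mem_filter,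
      Finset.mem_univ, true_and, not_exists]
    rintro g ⟨hg, hgeq⟩
    exact aux_ne_top g hg hgeq
  have hnumCent : numCent G = T.card + 1 := by
    rw [numCent, hcent, Set.ncard_insert_of_notMem htopT, Set.ncard_coe_finset]
  -- fiber cardinalities
  have hfibcard : ∀ H ∈ T, (N.filter (fun g => φ g = H)).card + cZ = r H * cZ := by
    intro H hH
    obtain ⟨x, hxN, rfl⟩ := Finset.mem_image.mp hH
    have hx : x ∉ Z := (Finset.mem_filter.mp hxN).2
    have hfib : N.filter (fun g => φ g = φ x) =
        Finset.univ.filter (fun g => g ∈ centerCentralizer x ∧ g ∉ Z) := by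
      ext g
      simp only [hN, Finset.filter_filter, Finset.mem_filter, Finset.mem_univ, true_and]
      constructor
      · rintro ⟨hg, heq⟩
        exact ⟨(aux_fiber hF x g hx hg).mp heq, hg⟩
      · rintro ⟨hgK, hg⟩
        exact ⟨hg, (aux_fiber hF x g hx hg).mpr hgK⟩
    have hsplit := Finset.card_filter_add_card_filter_not
      (s := Finset.univ.filter (fun g => g ∈ centerCentralizer x)) (p := fun g => g ∉ Z)
    have hZfil : (Finset.univ.filter (fun g => g ∈ centerCentralizer x)).filter
        (fun g => ¬ g ∉ Z) = Finset.univ.filter (fun g => g ∈ Z) := by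
      ext g
      simp only [Finset.filter_filter, Finset.mem_filter, Finset.mem_univ, true_and, not_not]
      exact ⟨fun h => h.2, fun h => ⟨aux_center_le_cc x h, h⟩⟩
    rw [hZfil] at hsplit
    have hKcard : (Finset.univ.filter (fun g => g ∈ centerCentralizer x)).card =
        Nat.card (centerCentralizer x) := by
      rw [Nat.card_eq_fintype_card, Fintype.card_subtype]
    have hZcard : (Finset.univ.filter (fun g => g ∈ Z)).card = cZ := by
      rw [hcZ, Nat.card_eq_fintype_card, Fintype.card_subtype]
    have h2 : Nat.card (centerCentralizer x) = r (φ x) * cZ := by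
      rw [hrφ]; exact aux_card Z _ (aux_center_le_cc x)
    have hfc : N.filter (fun g => φ g = φ x) =
        (Finset.univ.filter (fun g => g ∈ centerCentralizer x)).filter (fun g => g ∉ Z) := by
      rw [hfib, Finset.filter_filter]
    rw [hZcard, hKcard, h2] at hsplit
    rw [hfc]
    exact hsplit
  -- total count
  have hsum : N.card = ∑ H ∈ T, (N.filter (fun g => φ g = H)).card :=
    Finset.card_eq_sum_card_fiberwise (fun g hg => Finset.mem_image_of_mem φ hg)
  have hbig : (∑ H ∈ T, r H) * cZ = N.card + T.card * cZ := by
    calc (∑ H ∈ T, r H) * cZ = ∑ H ∈ T, r H * cZ := by rw [Finset.sum_mul]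
    _ = ∑ H ∈ T, ((N.filter (fun g => φ g = H)).card + cZ) := by
        exact Finset.sum_congr rfl fun H hH => (hfibcard H hH).symm
    _ = (∑ H ∈ T, (N.filter (fun g => φ g = H)).card) + T.card * cZ := by
        rw [Finset.sum_add_distrib, Finset.sum_const, smul_eq_mul]
    _ = N.card + T.card * cZ := by rw [← hsum]
  have hGcard : N.card + cZ = p ^ k * cZ := by
    have hsplit := Finset.card_filter_add_card_filter_not
      (s := (Finset.univ : Finset G)) (p := fun g => g ∉ Z)
    have : Finset.univ.filter (fun g : G => ¬ g ∉ Z) = Finset.univ.filter (fun g => g ∈ Z) := by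
      ext g; simp [not_not]
    rw [this] at hsplit
    have hZcard : (Finset.univ.filter (fun g => g ∈ Z)).card = cZ := by
      rw [hcZ, Nat.card_eq_fintype_card, Fintype.card_subtype]
    have hGc : (Finset.univ : Finset G).card = p ^ k * cZ := by
      rw [Finset.card_univ, ← Nat.card_eq_fintype_card, ← Subgroup.index_mul_card (H := Z), hk]
    rw [hZcard, hGc] at hsplit
    exact hsplit
  -- the possible values of `r`
  have hrval : ∀ H ∈ T, r H = p ∨ r H = p ^ 2 := by
    intro H hH
    obtain ⟨x, hxN, rfl⟩ := Finset.mem_image.mp hH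
    have hx : x ∉ Z := (Finset.mem_filter.mp hxN).2
    have hZK : Z ≤ centerCentralizer x := aux_center_le_cc x
    have hdvd : r (φ x) ∣ p ^ k := by
      rw [hrφ, ← hk]
      exact Subgroup.relIndex_dvd_index_of_le hZK
    obtain ⟨j, hjk, hj⟩ := (Nat.dvd_prime_pow hp).mp hdvd
    have hne1 : r (φ x) ≠ 1 := by
      rw [hrφ, Ne, Subgroup.relIndex_eq_one]
      intro hsub
      exact hx (hsub (aux_mem_cc x))
    have hle2 : r (φ x) ≤ p ^ 2 := by rw [hrφ]; exact hle x hx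
    have hp1 : 1 < p := hp.one_lt
    have hj1 : 1 ≤ j := by
      by_contra h
      push_neg at h
      interval_cases j
      · simp at hj; exact hne1 hj
    have hj2 : j ≤ 2 := by
      by_contra h
      push_neg at h
      have : p ^ 2 < p ^ j := Nat.pow_lt_pow_right hp1 h
      omega
    interval_cases j
    · exact Or.inl (by simpa using hj)
    · exact Or.inr hj
  -- identify `v`
  have hvT : v = (T.filter (fun H => r H = p ^ 2)).card := by
    rw [hv, ← Set.ncard_coe_finset]
    congr 1
    ext H
    simp only [Set.mem_setOf_eq, Finset.coe_filter, Finset.mem_coe, hT, hN, Finset.mem_image,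
      Finset.mem_filter, Finset.mem_univ, true_and]
    constructor
    · rintro ⟨x, hx, rfl, hrel⟩
      exact ⟨⟨x, hx, rfl⟩, by rw [hrφ x]; exact hrel⟩
    · rintro ⟨⟨x, hx, rfl⟩, hrel⟩
      exact ⟨x, hx, rfl, by rw [← hrφ x]; exact hrel⟩
  set a : ℕ := (T.filter (fun H => r H = p)).card with ha
  have hpne : p ≠ p ^ 2 := by
    have := hp.one_lt; nlinarith [hp.one_lt]
  have hfilne : T.filter (fun H => ¬ r H = p) = T.filter (fun H => r H = p ^ 2) := by
    apply Finset.filter_congr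
    intro H hH
    rcases hrval H hH with h | h <;> simp [h, hpne, hpne.symm]
  have hav : a + v = T.card := by
    rw [ha, hvT, ← hfilne]
    exact Finset.card_filter_add_card_filter_not (fun H => r H = p)
  have hsumr : ∑ H ∈ T, r H = a * p + v * p ^ 2 := by
    rw [← Finset.sum_filter_add_sum_filter_not T (fun H => r H = p), hfilne]
    congr 1
    · rw [Finset.sum_congr rfl (fun H hH => (Finset.mem_filter.mp hH).2),
        Finset.sum_const, smul_eq_mul]
    · rw [hvT, Finset.sum_congr rfl (fun H hH => (Finset.mem_filter.mp hH).2),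
        Finset.sum_const, smul_eq_mul]
  -- main equation
  have hE : a * p + v * p ^ 2 + 1 = p ^ k + (a + v) := by
    apply Nat.eq_of_mul_eq_mul_right hcZpos
    calc (a * p + v * p ^ 2 + 1) * cZ = (∑ H ∈ T, r H) * cZ + cZ := by
          rw [hsumr]; ring
    _ = N.card + T.card * cZ + cZ := by rw [hbig]
    _ = (N.card + cZ) + T.card * cZ := by ring
    _ = p ^ k * cZ + T.card * cZ := by rw [hGcard]
    _ = (p ^ k + (a + v)) * cZ := by rw [hav]; ring
  -- arithmetic conclusion
  have hp2 : 2 ≤ p := hp.two_le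
  have h1pk : 1 ≤ p ^ k := Nat.one_le_pow _ _ (by omega)
  have hEz : (a : ℤ) * p + v * p ^ 2 + 1 = p ^ k + (a + v) := by exact_mod_cast hE
  have hnat : (p - 1) * (a + v * (p + 1)) = p ^ k - 1 := by
    have h1 : (1 : ℕ) ≤ p := by omega
    zify [h1, h1pk]
    linear_combination hEz
  have hdiv : (p ^ k - 1) / (p - 1) = a + v * (p + 1) := by
    rw [← hnat, Nat.mul_div_cancel_left _ (by omega : 0 < p - 1)]
  rw [hnumCent, ← hav, hdiv]
  have hexp : v * (p + 1) = v * p + v := by ring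
  rw [hexp]
  set t := v * p with htdef
  omega
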